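/- arXiv:2308.03240 — 3 statements merged into one kernel-verified Lean document; each statement's English description precedes it below -/
import Mathlib

section
/- Let P_C be an n×n real matrix that is weakly diagonally dominant (for every row i, |P_C[i,i]| ≥ Σ_{j≠i} |P_C[i,j]|), and let J be the set of rows that are strictly diagonally dominant. Suppose J is nonempty and for every i ∉ J there exists a finite sequence of indices i, i₁, …, i_r, j with j ∈ J such that all the entries P_C[i,i₁], P_C[i₁,i₂], …, P_C[i_r, j] are nonzero. Then P_C is invertible. -/
open Finset

theorem shivakumar_chew_nonsingular (n : ℕ) (P : Matrix (Fin n) (Fin n) ℝ)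
    (hdom : ∀ i, ∑ j ∈ univ.erase i, |P i j| ≤ |P i i|)
    (J : Set (Fin n))
    (hJ : J = {i | ∑ j ∈ univ.erase i, |P i j| < |P i i|})
    (hJne : J.Nonempty)
    (hchain : ∀ i ∉ J, ∃ j ∈ J,
      Relation.ReflTransGen (fun a b => P a b ≠ 0) i j) :
    IsUnit P := by
  rw [Matrix.isUnit_iff_isUnit_det, isUnit_iff_ne_zero]
  intro hdet
  obtain ⟨v, hv, hPv⟩ := Matrix.exists_mulVec_eq_zero_iff.mpr hdet
  obtain ⟨i₀, hi₀⟩ := Function.ne_iff.mp hv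
  have hne : (univ : Finset (Fin n)).Nonempty := ⟨i₀, mem_univ _⟩
  obtain ⟨m, -, hm⟩ := Finset.exists_max_image univ (fun i => |v i|) hne
  set M := |v m| with hM
  have hMpos : 0 < M := lt_of_lt_of_le (abs_pos.mpr hi₀) (hm i₀ (mem_univ _))
  have hle : ∀ j, |v j| ≤ M := fun j => hm j (mem_univ _)
  have main : ∀ i, |v i| = M → |P i i| * M ≤ ∑ j ∈ univ.erase i, |P i j| * |v j| := by
    intro i hi
    have h0 : P i i * v i + ∑ j ∈ univ.erase i, P i j * v j = 0 := by
      rw [Finset.add_sum_erase univ (fun j => P i j * v j) (mem_univ i)]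
      have := congrFun hPv i
      simpa [Matrix.mulVec, dotProduct] using this
    have h1 : |P i i| * M = |∑ j ∈ univ.erase i, P i j * v j| := by
      rw [← hi, ← abs_mul]
      have h2 : P i i * v i = -∑ j ∈ univ.erase i, P i j * v j := by linarith
      rw [h2, abs_neg]
    calc |P i i| * M = |∑ j ∈ univ.erase i, P i j * v j| := h1
      _ ≤ ∑ j ∈ univ.erase i, |P i j * v j| := Finset.abs_sum_le_sum_abs _ _
      _ = ∑ j ∈ univ.erase i, |P i j| * |v j| := by simp [abs_mul]
  have hnotJ : ∀ i, |v i| = M → i ∉ J := by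
    intro i hi hiJ
    rw [hJ] at hiJ
    have hlt : (∑ j ∈ univ.erase i, |P i j|) * M < |P i i| * M :=
      mul_lt_mul_of_pos_right hiJ hMpos
    have h2 : ∑ j ∈ univ.erase i, |P i j| * |v j| ≤ (∑ j ∈ univ.erase i, |P i j|) * M := by
      rw [Finset.sum_mul]
      exact Finset.sum_le_sum fun j _ => mul_le_mul_of_nonneg_left (hle j) (abs_nonneg _)
    have := main i hi
    linarith
  have key : ∀ i, |v i| = M → ∀ j, P i j ≠ 0 → |v j| = M := by
    intro i hi j hij
    by_cases hji : j = i
    · rw [hji]; exact hi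
    by_contra hjM
    have hjlt : |v j| < M := lt_of_le_of_ne (hle j) hjM
    have hstrict : ∑ k ∈ univ.erase i, |P i k| * |v k| < ∑ k ∈ univ.erase i, |P i k| * M := by
      apply Finset.sum_lt_sum
      · exact fun k _ => mul_le_mul_of_nonneg_left (hle k) (abs_nonneg _)
      · exact ⟨j, Finset.mem_erase.mpr ⟨hji, mem_univ _⟩,
          mul_lt_mul_of_pos_left hjlt (abs_pos.mpr hij)⟩
    have h3 : ∑ k ∈ univ.erase i, |P i k| * M ≤ |P i i| * M := by
      rw [← Finset.sum_mul]
      exact mul_le_mul_of_nonneg_right (hdom i) hMpos.le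
    have := main i hi
    linarith
  have prop : ∀ a b, Relation.ReflTransGen (fun a b => P a b ≠ 0) a b →
      |v a| = M → |v b| = M := by
    intro a b h ha
    induction h with
    | refl => exact ha
    | tail hab hbc ih => exact key _ ih _ hbc
  obtain ⟨j, hjJ, hchain'⟩ := hchain m (hnotJ m rfl)
  exact hnotJ j (prop m j hchain' rfl) hjJ
end

section
/- Carbon conservation for the whole network: suppose nodal carbon intensities w ∈ ℝⁿ satisfy the carbon flow equations w_i·(Σ_{g∈G_i} P^G_{i,g} + Σ_{k∈N_i⁺} P^i_{ki}) = Σ_{g∈G_i} w^G_{i,g} P^G_{i,g} + Σ_{k∈N_i⁺} w_k P^i_{ki} for every node i, the power balances Σ_{k∈N_i⁺} P^i_{ki} + Σ_g P^G_{i,g} = Σ_{j∈N_i⁻} P^i_{ij} + Σ_l P^L_{i,l} hold, and branch losses satisfy P^i_{ij} = P^j_{ij} + P^loss_{ij} with branch carbon intensity equal to the sending node intensity. Then the total generation emission rate equals the total load-attributed plus loss-attributed emission rate: Σ_i Σ_g w^G_{i,g} P^G_{i,g} = Σ_i Σ_l w_i P^L_{i,l} + Σ_{ij∈E} w_i P^loss_{ij}.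 -/
open Finset

theorem network_carbon_conservation
    {V GI LI : Type*} [Fintype V] [Fintype GI] [Fintype LI]
    [DecidableEq V]
    (nodeG : GI → V) (nodeL : LI → V)
    (wG PG : GI → ℝ) (PL : LI → ℝ)
    (Psend Precv Ploss : V → V → ℝ)
    (w : V → ℝ)
    (hPG : ∀ g, 0 ≤ PG g) (hPL : ∀ l, 0 ≤ PL l)
    (hPsend : ∀ i j, 0 ≤ Psend i j) (hPrecv : ∀ i j, 0 ≤ Precv i j)
    (hloss : ∀ i j, Psend i j = Precv i j + Ploss i j)
    (hbal : ∀ i, (∑ k, Precv k i) + ∑ g ∈ univ.filter (fun g => nodeG g = i), PG g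
      = (∑ j, Psend i j) + ∑ l ∈ univ.filter (fun l => nodeL l = i), PL l)
    (hcf : ∀ i, w i * ((∑ g ∈ univ.filter (fun g => nodeG g = i), PG g) + ∑ k, Precv k i)
      = (∑ g ∈ univ.filter (fun g => nodeG g = i), wG g * PG g) + ∑ k, w k * Precv k i) :
    ∑ g, wG g * PG g
      = (∑ l, w (nodeL l) * PL l) + ∑ i, ∑ j, w i * Ploss i j := by
  classical
  have key : ∀ i, (∑ g ∈ univ.filter (fun g => nodeG g = i), wG g * PG g)
      = ((∑ j, w i * Precv i j) + (∑ j, w i * Ploss i j)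
        + (∑ l ∈ univ.filter (fun l => nodeL l = i), w i * PL l))
        - ∑ k, w k * Precv k i := by
    intro i
    have h1 : w i * ((∑ g ∈ univ.filter (fun g => nodeG g = i), PG g) + ∑ k, Precv k i)
        = (∑ j, w i * Precv i j) + (∑ j, w i * Ploss i j)
          + ∑ l ∈ univ.filter (fun l => nodeL l = i), w i * PL l := by
      calc w i * ((∑ g ∈ univ.filter (fun g => nodeG g = i), PG g) + ∑ k, Precv k i)
          = w i * ((∑ k, Precv k i) + ∑ g ∈ univ.filter (fun g => nodeG g = i), PG g) := by
            ring
        _ = w i * ((∑ j, Psend i j) + ∑ l ∈ univ.filter (fun l => nodeL l = i), PL l) := by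
            rw [hbal i]
        _ = (∑ j, w i * Psend i j) + ∑ l ∈ univ.filter (fun l => nodeL l = i), w i * PL l := by
            rw [mul_add, Finset.mul_sum, Finset.mul_sum]
        _ = (∑ j, (w i * Precv i j + w i * Ploss i j))
              + ∑ l ∈ univ.filter (fun l => nodeL l = i), w i * PL l := by
            simp only [hloss, mul_add]
        _ = _ := by rw [Finset.sum_add_distrib]
    have h2 := hcf i
    linarith [h1, h2]
  have hG : ∑ g, wG g * PG g
      = ∑ i, ∑ g ∈ univ.filter (fun g => nodeG g = i), wG g * PG g :=
    (Finset.sum_fiberwise_of_maps_to (fun g _ => mem_univ (nodeG g)) _).symm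
  have hL : ∑ l, w (nodeL l) * PL l
      = ∑ i, ∑ l ∈ univ.filter (fun l => nodeL l = i), w i * PL l := by
    rw [← Finset.sum_fiberwise_of_maps_to (fun l _ => mem_univ (nodeL l))
      (fun l => w (nodeL l) * PL l)]
    refine Finset.sum_congr rfl fun i _ => Finset.sum_congr rfl fun l hl => ?_
    rw [(Finset.mem_filter.mp hl).2]
  have hswap : ∑ i, ∑ j, w i * Precv i j = ∑ i, ∑ k, w k * Precv k i :=
    Finset.sum_comm
  rw [hG, Finset.sum_congr rfl fun i _ => key i]
  rw [Finset.sum_sub_distrib, Finset.sum_add_distrib, Finset.sum_add_distrib, hL, ← hswap]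
  ring
end

section
/- If the carbon flow matrix P_C = P_N − P_B satisfies the invertibility condition (weak diagonal dominance with nonempty strictly dominant set J and chains of nonzero entries from every row to J), then for any nonnegative generation emission vector r_G ≥ 0, the system P_C w = r_G has a unique solution w, and this solution satisfies w ≥ 0 componentwise. -/
open Finset

theorem carbon_flow_unique_nonneg_solution (n : ℕ)
    (P : Matrix (Fin n) (Fin n) ℝ)
    (hdom : ∀ i, ∑ j ∈ univ.erase i, |P i j| ≤ |P i i|)
    (hdiag : ∀ i, 0 ≤ P i i)
    (hoff : ∀ i j, i ≠ j → P i j ≤ 0)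
    (J : Set (Fin n))
    (hJ : J = {i | ∑ j ∈ univ.erase i, |P i j| < |P i i|})
    (hJne : J.Nonempty)
    (hchain : ∀ i ∉ J, ∃ j ∈ J,
      Relation.ReflTransGen (fun a b => P a b ≠ 0) i j)
    (r : Fin n → ℝ) (hr : ∀ i, 0 ≤ r i) :
    ∃ w : Fin n → ℝ, (P.mulVec w = r ∧ ∀ i, 0 ≤ w i) ∧
      ∀ w' : Fin n → ℝ, P.mulVec w' = r → w' = w := by
  classical
  obtain ⟨j₀, hj₀⟩ := hJne
  have habsdiag : ∀ i, |P i i| = P i i := fun i => abs_of_nonneg (hdiag i)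
  -- Key monotonicity principle: P.mulVec w ≥ 0 → w ≥ 0
  have key : ∀ w : Fin n → ℝ, (∀ i, 0 ≤ P.mulVec w i) → ∀ i, 0 ≤ w i := by
    intro w hw
    by_contra hneg
    push_neg at hneg
    obtain ⟨i₁, hi₁⟩ := hneg
    obtain ⟨i₀, -, hmin⟩ := Finset.exists_min_image univ w ⟨i₁, mem_univ i₁⟩
    set m := w i₀ with hm
    have hmneg : m < 0 := lt_of_le_of_lt (hmin i₁ (mem_univ i₁)) hi₁
    have hmle : ∀ j, m ≤ w j := fun j => hmin j (mem_univ j)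
    have step : ∀ i, w i = m → (i ∉ J ∧ ∀ j, P i j ≠ 0 → w j = m) := by
      intro i hi
      have hPij : ∀ j ∈ univ.erase i, P i j = -|P i j| := by
        intro j hj
        have hji : j ≠ i := (mem_erase.mp hj).1
        have : P i j ≤ 0 := hoff i j hji.symm
        rw [abs_of_nonpos this, neg_neg]
      have hsum : P.mulVec w i =
          m * (P i i - ∑ j ∈ univ.erase i, |P i j|)
            - ∑ j ∈ univ.erase i, |P i j| * (w j - m) := by
        rw [Matrix.mulVec, dotProduct]
        rw [← Finset.sum_erase_add univ _ (mem_univ i), hi]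
        have : ∀ j ∈ univ.erase i, P i j * w j = -(|P i j| * w j) := by
          intro j hj
          conv_lhs => rw [hPij j hj]
          ring
        rw [Finset.sum_congr rfl this]
        have h1 : ∑ j ∈ univ.erase i, |P i j| * (w j - m)
            = ∑ j ∈ univ.erase i, |P i j| * w j
              - m * ∑ j ∈ univ.erase i, |P i j| := by
          rw [Finset.mul_sum, ← Finset.sum_sub_distrib]
          exact Finset.sum_congr rfl fun j _ => by ring
        rw [h1, Finset.sum_neg_distrib]
        ring
      have hSnonneg : 0 ≤ ∑ j ∈ univ.erase i, |P i j| * (w j - m) :=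
        Finset.sum_nonneg fun j _ =>
          mul_nonneg (abs_nonneg _) (sub_nonneg.mpr (hmle j))
      have hAle : m * (P i i - ∑ j ∈ univ.erase i, |P i j|) ≤ 0 := by
        have h2 : 0 ≤ P i i - ∑ j ∈ univ.erase i, |P i j| := by
          have := hdom i; rw [habsdiag i] at this; linarith
        exact mul_nonpos_of_nonpos_of_nonneg hmneg.le h2
      have h0 : 0 ≤ P.mulVec w i := hw i
      rw [hsum] at h0
      have hS0 : ∑ j ∈ univ.erase i, |P i j| * (w j - m) = 0 := by linarith
      have hA0 : m * (P i i - ∑ j ∈ univ.erase i, |P i j|) = 0 := by linarith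
      have hDeq : P i i = ∑ j ∈ univ.erase i, |P i j| := by
        rcases mul_eq_zero.mp hA0 with h | h
        · exact absurd h hmneg.ne
        · linarith
      constructor
      · rw [hJ]
        simp only [Set.mem_setOf_eq, habsdiag i, not_lt]
        linarith
      · intro j hPj
        by_cases hji : j = i
        · rw [hji]; exact hi
        · have hjmem : j ∈ univ.erase i := mem_erase.mpr ⟨hji, mem_univ j⟩
          have := (Finset.sum_eq_zero_iff_of_nonneg
            (fun k _ => mul_nonneg (abs_nonneg _)
              (sub_nonneg.mpr (hmle k)))).mp hS0 j hjmem
          rcases mul_eq_zero.mp this with h | h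
          · exact absurd (abs_eq_zero.mp h) hPj
          · linarith
    have closed : ∀ a b, Relation.ReflTransGen (fun a b => P a b ≠ 0) a b →
        w a = m → w b = m := by
      intro a b h
      induction h with
      | refl => exact id
      | tail h1 h2 ih => intro ha; exact (step _ (ih ha)).2 _ h2
    obtain ⟨j, hjJ, hpath⟩ := hchain i₀ (step i₀ rfl).1
    exact (step j (closed _ _ hpath rfl)).1 hjJ
  -- injectivity of mulVec
  have hker : ∀ v : Fin n → ℝ, P.mulVec v = 0 → v = 0 := by
    intro v hv
    have h1 : ∀ i, 0 ≤ v i := key v (fun i => by rw [hv]; exact le_refl 0)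
    have h2 : ∀ i, 0 ≤ (-v) i := key (-v) (fun i => by
      rw [Matrix.mulVec_neg, hv]; simp)
    funext i
    have := h2 i
    simp only [Pi.neg_apply, neg_nonneg] at this
    exact le_antisymm this (h1 i)
  have hinj : Function.Injective P.mulVecLin := by
    rw [← LinearMap.ker_eq_bot, LinearMap.ker_eq_bot']
    intro v hv
    exact hker v hv
  have hsurj : Function.Surjective P.mulVecLin :=
    (LinearMap.injective_iff_surjective).mp hinj
  obtain ⟨w, hwr⟩ := hsurj r
  rw [Matrix.mulVecLin_apply] at hwr
  refine ⟨w, ⟨hwr, key w (fun i => by rw [hwr]; exact hr i)⟩, ?_⟩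
  intro w' hw'
  apply hinj
  rw [Matrix.mulVecLin_apply, Matrix.mulVecLin_apply, hw', hwr]
end
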